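/- For positive integers a, μ and nonnegative integer j, let S_{a,μ,j} denote the set of subsets W of the vertex set of the directed cycle C_a on vertices v_1,...,v_a (edges v_1v_2, ..., v_{a-1}v_a, v_av_1) such that |W| = μ and the graph C_a − W (delete W and incident edges) has exactly j connected components. Then for all integers a ≥ 3, μ ≥ 2, j ≥ 1: |S_{a,μ,j}| = |S_{a-1,μ-1,j}| + Σ_{i=μ+j-2}^{a-2} |S_{i,μ-1,j-1}|. -/

import Mathlib

open SimpleGraph

/-- The number of connected components of the graph obtained from the cycle `C_n`
(on labelled vertices `v_1, …, v_n`) by deleting the vertex subset `W` together with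
all incident edges. -/
noncomputable def cycNumComponents (n : ℕ) (W : Finset (Fin n)) : ℕ :=
  Nat.card ((cycleGraph n).induce ((↑W : Set (Fin n))ᶜ)).ConnectedComponent

/-- `cycSet n k ℓ` is the set `S_{n,k,ℓ}` of `k`-element subsets `W` of the vertices of
the cycle `C_n` such that `C_n − W` has exactly `ℓ` connected components. -/
noncomputable def cycSet (n k ℓ : ℕ) : Finset (Finset (Fin n)) :=
  Finset.univ.filter (fun W => W.card = k ∧ cycNumComponents n W = ℓ)

open Finset


namespace CycRec

open Fin.CommRing

/-- the set of "run ends": vertices not in `W` whose cyclic successor is in `W`. -/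
def cycEnds (n : ℕ) (W : Finset (Fin n)) : Finset (Fin n) :=
  Finset.univ.filter (fun i => i ∉ W ∧ i + ⟨1 % n, Nat.mod_lt 1 i.pos⟩ ∈ W)

variable {n : ℕ} [NeZero n]

lemma cycEnds_eq (n : ℕ) [NeZero n] (W : Finset (Fin n)) :
    cycEnds n W = Finset.univ.filter (fun i => i ∉ W ∧ i + 1 ∈ W) := by
  have h : (fun i : Fin n => (⟨1 % n, Nat.mod_lt 1 i.pos⟩ : Fin n)) = fun _ => 1 := by
    funext i
    ext
    simp [Fin.val_one']
  ext i
  simp only [cycEnds, mem_filter]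
  rw [show (⟨1 % n, Nat.mod_lt 1 i.pos⟩ : Fin n) = 1 from congrFun h i]

lemma mem_cycEnds {W : Finset (Fin n)} {i : Fin n} :
    i ∈ cycEnds n W ↔ i ∉ W ∧ i + 1 ∈ W := by
  rw [cycEnds_eq]; simp

lemma exists_step (W : Finset (Fin n)) (hW : W.Nonempty) (x : Fin n) :
    ∃ t : ℕ, x + ((t + 1 : ℕ) : Fin n) ∈ W := by
  obtain ⟨w, hw⟩ := id hW
  refine ⟨(w - (x + 1)).val, ?_⟩
  have h : ((((w - (x + 1)).val + 1 : ℕ)) : Fin n) = w - x := by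
    push_cast [Fin.cast_val_eq_self]
    ring
  rw [h]
  simpa using hw

noncomputable def runEnd (W : Finset (Fin n)) (hW : W.Nonempty) (x : Fin n) : Fin n :=
  x + ((Nat.find (exists_step W hW x) : ℕ) : Fin n)

lemma runEnd_add_one_mem (W : Finset (Fin n)) (hW : W.Nonempty) (x : Fin n) :
    runEnd W hW x + 1 ∈ W := by
  have h := Nat.find_spec (exists_step W hW x)
  rw [runEnd, add_assoc]
  push_cast at h
  exact_mod_cast h

lemma not_mem_of_le_find (W : Finset (Fin n)) (hW : W.Nonempty) (x : Fin n) (hx : x ∉ W)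
    {s : ℕ} (hs : s ≤ Nat.find (exists_step W hW x)) : x + ((s : ℕ) : Fin n) ∉ W := by
  match s with
  | 0 => simpa using hx
  | t + 1 =>
    have := Nat.find_min (exists_step W hW x) (show t < _ by omega)
    simpa using this

lemma runEnd_not_mem (W : Finset (Fin n)) (hW : W.Nonempty) (x : Fin n) (hx : x ∉ W) :
    runEnd W hW x ∉ W :=
  not_mem_of_le_find W hW x hx le_rfl

lemma runEnd_mem_cycEnds (W : Finset (Fin n)) (hW : W.Nonempty) (x : Fin n) (hx : x ∉ W) :
    runEnd W hW x ∈ cycEnds n W :=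
  mem_cycEnds.2 ⟨runEnd_not_mem W hW x hx, runEnd_add_one_mem W hW x⟩

lemma runEnd_eq_self (W : Finset (Fin n)) (hW : W.Nonempty) (x : Fin n) (hx1 : x + 1 ∈ W) :
    runEnd W hW x = x := by
  have h0 : Nat.find (exists_step W hW x) = 0 := by
    rw [Nat.find_eq_zero]
    simpa using hx1
  rw [runEnd, h0]
  simp

lemma find_succ (W : Finset (Fin n)) (hW : W.Nonempty) (x : Fin n)
    (hx1 : x + 1 ∉ W) :
    Nat.find (exists_step W hW x) = Nat.find (exists_step W hW (x + 1)) + 1 := by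
  have key : ∀ t : ℕ, (x + ((t + 1 + 1 : ℕ) : Fin n) ∈ W) ↔ ((x + 1) + ((t + 1 : ℕ) : Fin n) ∈ W) := by
    intro t
    have h : x + ((t + 1 + 1 : ℕ) : Fin n) = (x + 1) + ((t + 1 : ℕ) : Fin n) := by
      push_cast; ring
    rw [h]
  rw [Nat.find_eq_iff]
  constructor
  · rw [key]; exact Nat.find_spec (exists_step W hW (x + 1))
  · intro k hk
    match k with
    | 0 => simpa using hx1
    | t + 1 =>
      rw [key]
      exact Nat.find_min (exists_step W hW (x + 1)) (by omega)

lemma runEnd_succ (W : Finset (Fin n)) (hW : W.Nonempty) (x : Fin n)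
    (hx1 : x + 1 ∉ W) :
    runEnd W hW x = runEnd W hW (x + 1) := by
  rw [runEnd, runEnd, find_succ W hW x hx1]
  push_cast
  ring

end CycRec

namespace CycRec

open Fin.CommRing

lemma two_le_n {n : ℕ} [NeZero n] {x w : Fin n} (hxw : x ≠ w) : 2 ≤ n := by
  by_contra h
  push_neg at h
  have h1 : n = 1 := by have := NeZero.pos n; omega
  apply hxw
  ext
  have hx := x.isLt
  have hw := w.isLt
  omega

lemma adj_succ {n : ℕ} [NeZero n] (h2 : 2 ≤ n) (x : Fin n) :
    (cycleGraph n).Adj x (x + 1) := by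
  rw [cycleGraph_adj']
  right
  rw [add_sub_cancel_left, Fin.val_one']
  exact Nat.mod_eq_of_lt (by omega)

lemma reach_runEnd_aux {n : ℕ} [NeZero n] (W : Finset (Fin n)) (hW : W.Nonempty) :
    ∀ (m : ℕ) (x : Fin n) (hx : x ∉ W), Nat.find (exists_step W hW x) = m →
      ((cycleGraph n).induce ((↑W : Set (Fin n))ᶜ)).Reachable
        ⟨x, by simpa using hx⟩ ⟨runEnd W hW x, by simpa using runEnd_not_mem W hW x hx⟩ := by
  intro m
  induction m with
  | zero =>
    intro x hx h0
    have he : runEnd W hW x = x := by rw [runEnd, h0]; simp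
    have : (⟨runEnd W hW x, by simpa using runEnd_not_mem W hW x hx⟩ :
        ((↑W : Set (Fin n))ᶜ : Set (Fin n))) = ⟨x, by simpa using hx⟩ := Subtype.ext he
    rw [this]
  | succ m ih =>
    intro x hx hm
    have hx1 : x + 1 ∉ W := by
      intro hmem
      have h0 : Nat.find (exists_step W hW x) = 0 := by
        rw [Nat.find_eq_zero]
        simpa using hmem
      omega
    have hfind : Nat.find (exists_step W hW (x + 1)) = m := by
      have := find_succ W hW x hx1
      omega
    obtain ⟨w, hw⟩ := id hW
    have h2 : 2 ≤ n := two_le_n (show x ≠ w by rintro rfl; exact hx hw)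
    have hadj : ((cycleGraph n).induce ((↑W : Set (Fin n))ᶜ)).Adj
        ⟨x, by simpa using hx⟩ ⟨x + 1, by simpa using hx1⟩ := by
      simp only [comap_adj, Function.Embedding.coe_subtype]
      exact adj_succ h2 x
    have hend : (⟨runEnd W hW x, by simpa using runEnd_not_mem W hW x hx⟩ :
        ((↑W : Set (Fin n))ᶜ : Set (Fin n))) =
        ⟨runEnd W hW (x + 1), by simpa using runEnd_not_mem W hW (x + 1) hx1⟩ :=
      Subtype.ext (runEnd_succ W hW x hx1)
    rw [hend]
    exact hadj.reachable.trans (ih (x + 1) hx1 hfind)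

lemma reach_runEnd {n : ℕ} [NeZero n] (W : Finset (Fin n)) (hW : W.Nonempty)
    (x : Fin n) (hx : x ∉ W) :
    ((cycleGraph n).induce ((↑W : Set (Fin n))ᶜ)).Reachable
      ⟨x, by simpa using hx⟩ ⟨runEnd W hW x, by simpa using runEnd_not_mem W hW x hx⟩ :=
  reach_runEnd_aux W hW _ x hx rfl

lemma adj_runEnd_eq {n : ℕ} [NeZero n] (W : Finset (Fin n)) (hW : W.Nonempty)
    (u v : ((↑W : Set (Fin n))ᶜ : Set (Fin n)))
    (h : ((cycleGraph n).induce ((↑W : Set (Fin n))ᶜ)).Adj u v) :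
    runEnd W hW u.1 = runEnd W hW v.1 := by
  have hu : (u : Fin n) ∉ W := fun h => u.2 (Finset.mem_coe.mpr h)
  have hv : (v : Fin n) ∉ W := fun h => v.2 (Finset.mem_coe.mpr h)
  have hadj : (cycleGraph n).Adj u.1 v.1 := by
    simpa only [comap_adj, Function.Embedding.coe_subtype] using h
  obtain ⟨w, hw⟩ := id hW
  have h2 : 2 ≤ n := two_le_n (show (u : Fin n) ≠ w by rintro h'; exact hu (h' ▸ hw))
  have hone : (1 : Fin n).val = 1 := by rw [Fin.val_one']; exact Nat.mod_eq_of_lt (by omega)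
  rw [cycleGraph_adj'] at hadj
  rcases hadj with h1 | h1
  · -- u - v = 1, i.e. u = v + 1
    have : u.1 - v.1 = 1 := by ext; rw [hone]; exact h1
    have huv : u.1 = v.1 + 1 := by
      rw [sub_eq_iff_eq_add] at this
      rw [this, add_comm]
    rw [huv]
    exact (runEnd_succ W hW v.1 (huv ▸ hu)).symm
  · have : v.1 - u.1 = 1 := by ext; rw [hone]; exact h1
    have hvu : v.1 = u.1 + 1 := by
      rw [sub_eq_iff_eq_add] at this
      rw [this, add_comm]
    rw [hvu]
    exact runEnd_succ W hW u.1 (hvu ▸ hv)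

end CycRec


namespace CycRec

lemma cycNumComponents_eq {n : ℕ} (W : Finset (Fin n)) (hW : W.Nonempty) :
    cycNumComponents n W = (cycEnds n W).card := by
  haveI : NeZero n := ⟨by rintro rfl; exact (id hW).choose.elim0⟩
  classical
  have hwalk : ∀ (u v : ((↑W : Set (Fin n))ᶜ : Set (Fin n)))
      (p : ((cycleGraph n).induce ((↑W : Set (Fin n))ᶜ)).Walk u v),
      runEnd W hW u.1 = runEnd W hW v.1 := by
    intro u v p
    induction p with
    | nil => rfl
    | cons h q ih => exact (adj_runEnd_eq W hW _ _ h).trans ih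
  let f : ((cycleGraph n).induce ((↑W : Set (Fin n))ᶜ)).ConnectedComponent →
      {e : Fin n // e ∈ cycEnds n W} :=
    ConnectedComponent.lift
      (fun v => ⟨runEnd W hW v.1,
        runEnd_mem_cycEnds W hW v.1 (fun h => v.2 (Finset.mem_coe.mpr h))⟩)
      (fun u v p _ => Subtype.ext (hwalk u v p))
  have hbij : Function.Bijective f := by
    constructor
    · intro c d
      refine ConnectedComponent.ind₂ (fun u v h => ?_) c d
      have hend : runEnd W hW u.1 = runEnd W hW v.1 := congrArg Subtype.val h
      have hu : (u : Fin n) ∉ W := fun h' => u.2 (Finset.mem_coe.mpr h')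
      have hv : (v : Fin n) ∉ W := fun h' => v.2 (Finset.mem_coe.mpr h')
      apply ConnectedComponent.sound
      have r1 := reach_runEnd W hW u.1 hu
      have r2 := reach_runEnd W hW v.1 hv
      have hsrc1 : (⟨u.1, by simpa using hu⟩ : ((↑W : Set (Fin n))ᶜ : Set (Fin n))) = u :=
        Subtype.ext rfl
      have hsrc2 : (⟨v.1, by simpa using hv⟩ : ((↑W : Set (Fin n))ᶜ : Set (Fin n))) = v :=
        Subtype.ext rfl
      rw [hsrc1] at r1
      rw [hsrc2] at r2
      have hmid : (⟨runEnd W hW u.1, by simpa using runEnd_not_mem W hW u.1 hu⟩ :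
          ((↑W : Set (Fin n))ᶜ : Set (Fin n))) =
          ⟨runEnd W hW v.1, by simpa using runEnd_not_mem W hW v.1 hv⟩ := Subtype.ext hend
      rw [hmid] at r1
      exact r1.trans r2.symm
    · intro e
      obtain ⟨he1, he2⟩ := mem_cycEnds.mp e.2
      refine ⟨SimpleGraph.connectedComponentMk _ ⟨e.1, by simpa using he1⟩, ?_⟩
      exact Subtype.ext (runEnd_eq_self W hW e.1 he2)
  calc cycNumComponents n W
      = Nat.card {e : Fin n // e ∈ cycEnds n W} := Nat.card_eq_of_bijective f hbij
    _ = (cycEnds n W).card := by rw [Nat.card_eq_fintype_card, Fintype.card_coe]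


end CycRec
open Finset

namespace CycRec

def zEnds {n : ℕ} (W : Finset (Fin (n + 1))) : Finset (Fin (n + 1)) :=
  Finset.univ.filter (fun i => i ∉ W ∧ (i = Fin.last n ∨ i + 1 ∈ W))

lemma mem_zEnds {n : ℕ} {W : Finset (Fin (n + 1))} {i : Fin (n + 1)} :
    i ∈ zEnds W ↔ i ∉ W ∧ (i = Fin.last n ∨ i + 1 ∈ W) := by simp [zEnds]

def trunc {n : ℕ} (W : Finset (Fin (n + 2))) : Finset (Fin (n + 1)) :=
  Finset.univ.filter (fun k => Fin.castSucc k ∈ W)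

lemma mem_trunc {n : ℕ} {W : Finset (Fin (n + 2))} {k : Fin (n + 1)} :
    k ∈ trunc W ↔ Fin.castSucc k ∈ W := by simp [trunc]

lemma castSucc_ne_last {n : ℕ} (k : Fin (n + 1)) :
    Fin.castSucc k ≠ Fin.last (n + 1) := (Fin.castSucc_lt_last k).ne

lemma castSucc_add_one {n : ℕ} {k : Fin (n + 1)} (hk : k ≠ Fin.last n) :
    (Fin.castSucc k : Fin (n + 2)) + 1 = Fin.castSucc (k + 1) := by
  have h1 : k.val < n := lt_of_le_of_ne (Nat.lt_succ_iff.mp k.isLt)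
    (fun h => hk (Fin.ext h))
  ext
  rw [Fin.val_add, Fin.coe_castSucc, Fin.coe_castSucc, Fin.val_add, Fin.val_one', Fin.val_one',
    Nat.mod_eq_of_lt (show (1:ℕ) < n + 2 by omega), Nat.mod_eq_of_lt (show (1:ℕ) < n + 1 by omega),
    Nat.mod_eq_of_lt (show k.val + 1 < n + 2 by omega), Nat.mod_eq_of_lt (show k.val + 1 < n + 1 by omega)]

lemma castSucc_last_add_one {n : ℕ} :
    (Fin.castSucc (Fin.last n) : Fin (n + 2)) + 1 = Fin.last (n + 1) := by
  ext
  rw [Fin.val_add, Fin.coe_castSucc, Fin.val_one, Fin.val_last, Fin.val_last]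
  exact Nat.mod_eq_of_lt (by omega)

lemma mem_map_castSucc {n : ℕ} {s : Finset (Fin (n + 1))} {k : Fin (n + 1)} :
    Fin.castSucc k ∈ s.map Fin.castSuccEmb ↔ k ∈ s := by
  rw [show (Fin.castSucc k : Fin (n+2)) = Fin.castSuccEmb k from rfl]
  exact Finset.mem_map' _

lemma last_not_mem_map_castSucc {n : ℕ} {s : Finset (Fin (n + 1))} :
    Fin.last (n + 1) ∉ s.map Fin.castSuccEmb := by
  simp only [Finset.mem_map]
  rintro ⟨a, _, ha⟩
  exact castSucc_ne_last a ha

lemma trunc_map {n : ℕ} (W' : Finset (Fin (n + 1))) :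
    trunc (W'.map Fin.castSuccEmb) = W' := by
  ext k; rw [mem_trunc, mem_map_castSucc]

lemma trunc_insert_last_map {n : ℕ} (W' : Finset (Fin (n + 1))) :
    trunc (insert (Fin.last (n + 1)) (W'.map Fin.castSuccEmb)) = W' := by
  ext k
  rw [mem_trunc, Finset.mem_insert, mem_map_castSucc]
  simp only [castSucc_ne_last k, false_or]

lemma eq_insert_of_last_mem {n : ℕ} {W : Finset (Fin (n + 2))}
    (h : Fin.last (n + 1) ∈ W) :
    W = insert (Fin.last (n + 1)) ((trunc W).map Fin.castSuccEmb) := by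
  ext i
  induction i using Fin.lastCases with
  | last => simp [h]
  | cast k =>
    rw [Finset.mem_insert, mem_map_castSucc, mem_trunc]
    simp only [castSucc_ne_last k, false_or]

lemma eq_map_of_last_not_mem {n : ℕ} {W : Finset (Fin (n + 2))}
    (h : Fin.last (n + 1) ∉ W) :
    W = (trunc W).map Fin.castSuccEmb := by
  ext i
  induction i using Fin.lastCases with
  | last =>
    simp only [h, false_iff]
    exact last_not_mem_map_castSucc
  | cast k => rw [mem_map_castSucc, mem_trunc]

/-- peeling a final `1`: run-ends are preserved. -/
lemma zEnds_of_last_mem {n : ℕ} {W : Finset (Fin (n + 2))}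
    (h : Fin.last (n + 1) ∈ W) :
    zEnds W = (zEnds (trunc W)).map Fin.castSuccEmb := by
  ext i
  induction i using Fin.lastCases with
  | last =>
    simp only [mem_zEnds, h]
    constructor
    · rintro ⟨hc, -⟩; exact absurd trivial hc
    · intro hc; exact absurd hc last_not_mem_map_castSucc
  | cast k =>
    rw [mem_zEnds, mem_map_castSucc, mem_zEnds, mem_trunc, mem_trunc]
    by_cases hk : k = Fin.last n
    · subst hk
      rw [castSucc_last_add_one]
      simp only [castSucc_ne_last, false_or, eq_self_iff_true, true_or]
      simp [h]
    · rw [castSucc_add_one hk]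
      simp [castSucc_ne_last k, hk]

/-- peeling a final `0` whose predecessor is a `1`: one run-end (the last position) is added. -/
lemma zEnds_of_last_not_mem_of_mem {n : ℕ} {W : Finset (Fin (n + 2))}
    (h : Fin.last (n + 1) ∉ W) (h2 : Fin.castSucc (Fin.last n) ∈ W) :
    zEnds W = insert (Fin.last (n + 1)) ((zEnds (trunc W)).map Fin.castSuccEmb) := by
  ext i
  induction i using Fin.lastCases with
  | last => simp [mem_zEnds, h]
  | cast k =>
    rw [Finset.mem_insert, mem_map_castSucc, mem_zEnds, mem_zEnds, mem_trunc]
    simp only [castSucc_ne_last k, false_or]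
    by_cases hk : k = Fin.last n
    · subst hk
      rw [castSucc_last_add_one]
      simp [h, h2]
    · rw [castSucc_add_one hk]
      simp [hk, mem_trunc]

/-- peeling a final `0` whose predecessor is a `0`: the last run moves. -/
lemma zEnds_of_last_not_mem_of_not_mem {n : ℕ} {W : Finset (Fin (n + 2))}
    (h : Fin.last (n + 1) ∉ W) (h2 : Fin.castSucc (Fin.last n) ∉ W) :
    zEnds W = insert (Fin.last (n + 1))
      (((zEnds (trunc W)).erase (Fin.last n)).map Fin.castSuccEmb) := by
  ext i
  induction i using Fin.lastCases with
  | last => simp [mem_zEnds, h]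
  | cast k =>
    rw [Finset.mem_insert, mem_map_castSucc, Finset.mem_erase, mem_zEnds, mem_zEnds, mem_trunc]
    simp only [castSucc_ne_last k, false_or]
    by_cases hk : k = Fin.last n
    · subst hk
      rw [castSucc_last_add_one]
      simp [h, h2]
    · rw [castSucc_add_one hk]
      simp [hk, mem_trunc]

lemma last_mem_zEnds_trunc {n : ℕ} {W : Finset (Fin (n + 2))}
    (h2 : Fin.castSucc (Fin.last n) ∉ W) :
    Fin.last n ∈ zEnds (trunc W) := by
  rw [mem_zEnds, mem_trunc]
  exact ⟨h2, Or.inl rfl⟩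

end CycRec

namespace CycRec

lemma zero_ne_last {n : ℕ} : (0 : Fin (n + 2)) ≠ Fin.last (n + 1) := by
  simp [Fin.ext_iff]

def linSet (n k ℓ : ℕ) (b c : Bool) : Finset (Finset (Fin (n + 1))) :=
  Finset.univ.filter (fun W => W.card = k ∧ (zEnds W).card = ℓ ∧
    (((0 : Fin (n + 1)) ∈ W) ↔ b = true) ∧ ((Fin.last n ∈ W) ↔ c = true))

def lin (n k ℓ : ℕ) (b c : Bool) : ℕ := (linSet n k ℓ b c).card

lemma mem_linSet {n k ℓ : ℕ} {b c : Bool} {W : Finset (Fin (n + 1))} :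
    W ∈ linSet n k ℓ b c ↔ W.card = k ∧ (zEnds W).card = ℓ ∧
      (((0 : Fin (n + 1)) ∈ W) ↔ b = true) ∧ ((Fin.last n ∈ W) ↔ c = true) := by
  simp [linSet]

def linSetQ (n k ℓ : ℕ) (b c q : Bool) : Finset (Finset (Fin (n + 2))) :=
  (linSet (n + 1) k ℓ b c).filter
    (fun W => (Fin.castSucc (Fin.last n) ∈ W) ↔ q = true)

lemma mem_linSetQ {n k ℓ : ℕ} {b c q : Bool} {W : Finset (Fin (n + 2))} :
    W ∈ linSetQ n k ℓ b c q ↔ W ∈ linSet (n + 1) k ℓ b c ∧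
      ((Fin.castSucc (Fin.last n) ∈ W) ↔ q = true) := by
  simp [linSetQ]

lemma lin_partition (n k ℓ : ℕ) (b c : Bool) :
    lin (n + 1) k ℓ b c
      = (linSetQ n k ℓ b c true).card + (linSetQ n k ℓ b c false).card := by
  have h1 : linSetQ n k ℓ b c true
      = (linSet (n + 1) k ℓ b c).filter (fun W => Fin.castSucc (Fin.last n) ∈ W) := by
    apply Finset.filter_congr
    intro W _
    simp
  have h2 : linSetQ n k ℓ b c false
      = (linSet (n + 1) k ℓ b c).filter (fun W => ¬ Fin.castSucc (Fin.last n) ∈ W) := by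
    apply Finset.filter_congr
    intro W _
    simp
  rw [h1, h2, Finset.card_filter_add_card_filter_not, lin]

lemma cardQ_last_mem (n k ℓ : ℕ) (b q : Bool) :
    (linSetQ n (k + 1) ℓ b true q).card = lin n k ℓ b q := by
  rw [lin]
  refine Finset.card_bij' (fun W _ => trunc W)
    (fun W' _ => insert (Fin.last (n + 1)) (W'.map Fin.castSuccEmb)) ?_ ?_ ?_ ?_
  · intro W hW
    rw [mem_linSetQ, mem_linSet] at hW
    obtain ⟨⟨hcard, hz, hb, hc⟩, hq⟩ := hW
    have hlast : Fin.last (n + 1) ∈ W := hc.mpr rfl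
    rw [zEnds_of_last_mem hlast, Finset.card_map] at hz
    rw [mem_linSet]
    refine ⟨?_, hz, ?_, ?_⟩
    · have h := congrArg Finset.card (eq_insert_of_last_mem hlast)
      rw [hcard, Finset.card_insert_of_notMem last_not_mem_map_castSucc,
        Finset.card_map] at h
      omega
    · rw [mem_trunc, Fin.castSucc_zero]; exact hb
    · rw [mem_trunc]; exact hq
  · intro W' hW'
    rw [mem_linSet] at hW'
    obtain ⟨hcard, hz, hb, hc⟩ := hW'
    have hlast : Fin.last (n + 1) ∈ insert (Fin.last (n + 1)) (W'.map Fin.castSuccEmb) :=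
      Finset.mem_insert_self _ _
    rw [mem_linSetQ, mem_linSet]
    refine ⟨⟨?_, ?_, ?_, ?_⟩, ?_⟩
    · rw [Finset.card_insert_of_notMem last_not_mem_map_castSucc, Finset.card_map, hcard]
    · rw [zEnds_of_last_mem hlast, trunc_insert_last_map, Finset.card_map]; exact hz
    · rw [Finset.mem_insert]
      simp only [zero_ne_last, false_or]
      rw [← Fin.castSucc_zero, mem_map_castSucc]
      exact hb
    · simp [hlast]
    · rw [Finset.mem_insert]
      simp only [castSucc_ne_last, false_or]
      rw [mem_map_castSucc]
      exact hc
  · intro W hW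
    rw [mem_linSetQ, mem_linSet] at hW
    exact (eq_insert_of_last_mem (hW.1.2.2.2.mpr rfl)).symm
  · intro W' _
    exact trunc_insert_last_map W'

lemma cardQ_last_not_mem_q_true (n k ℓ : ℕ) (b : Bool) :
    (linSetQ n k (ℓ + 1) b false true).card = lin n k ℓ b true := by
  rw [lin]
  refine Finset.card_bij' (fun W _ => trunc W)
    (fun W' _ => W'.map Fin.castSuccEmb) ?_ ?_ ?_ ?_
  · intro W hW
    rw [mem_linSetQ, mem_linSet] at hW
    obtain ⟨⟨hcard, hz, hb, hc⟩, hq⟩ := hW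
    have hlast : Fin.last (n + 1) ∉ W := fun h => by simp [h] at hc
    have hq' : Fin.castSucc (Fin.last n) ∈ W := hq.mpr rfl
    rw [zEnds_of_last_not_mem_of_mem hlast hq',
      Finset.card_insert_of_notMem last_not_mem_map_castSucc, Finset.card_map] at hz
    rw [mem_linSet]
    refine ⟨?_, by omega, ?_, ?_⟩
    · have h := congrArg Finset.card (eq_map_of_last_not_mem hlast)
      rw [hcard, Finset.card_map] at h
      omega
    · rw [mem_trunc, Fin.castSucc_zero]; exact hb
    · rw [mem_trunc]
      simp [hq']
  · intro W' hW'
    rw [mem_linSet] at hW'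
    obtain ⟨hcard, hz, hb, hc⟩ := hW'
    have hlastW' : Fin.last n ∈ W' := hc.mpr rfl
    have hlast : Fin.last (n + 1) ∉ W'.map Fin.castSuccEmb := last_not_mem_map_castSucc
    have hq' : Fin.castSucc (Fin.last n) ∈ W'.map Fin.castSuccEmb :=
      mem_map_castSucc.mpr hlastW'
    rw [mem_linSetQ, mem_linSet]
    refine ⟨⟨?_, ?_, ?_, ?_⟩, by simp [hq']⟩
    · rw [Finset.card_map, hcard]
    · rw [zEnds_of_last_not_mem_of_mem hlast hq', trunc_map,
        Finset.card_insert_of_notMem last_not_mem_map_castSucc, Finset.card_map, hz]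
    · rw [← Fin.castSucc_zero, mem_map_castSucc]; exact hb
    · simp [hlast]
  · intro W hW
    rw [mem_linSetQ, mem_linSet] at hW
    have hlast : Fin.last (n + 1) ∉ W := fun h => by simpa [h] using hW.1.2.2.2
    exact (eq_map_of_last_not_mem hlast).symm
  · intro W' _
    exact trunc_map W'

lemma cardQ_last_not_mem_q_false (n k ℓ : ℕ) (b : Bool) :
    (linSetQ n k ℓ b false false).card = lin n k ℓ b false := by
  rw [lin]
  refine Finset.card_bij' (fun W _ => trunc W)
    (fun W' _ => W'.map Fin.castSuccEmb) ?_ ?_ ?_ ?_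
  · intro W hW
    rw [mem_linSetQ, mem_linSet] at hW
    obtain ⟨⟨hcard, hz, hb, hc⟩, hq⟩ := hW
    have hlast : Fin.last (n + 1) ∉ W := fun h => by simp [h] at hc
    have hq' : Fin.castSucc (Fin.last n) ∉ W := fun h => by simp [h] at hq
    have hmem : Fin.last n ∈ zEnds (trunc W) := last_mem_zEnds_trunc hq'
    rw [zEnds_of_last_not_mem_of_not_mem hlast hq',
      Finset.card_insert_of_notMem last_not_mem_map_castSucc, Finset.card_map] at hz
    have herase := Finset.card_erase_add_one hmem
    rw [mem_linSet]
    refine ⟨?_, by omega, ?_, ?_⟩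
    · have h := congrArg Finset.card (eq_map_of_last_not_mem hlast)
      rw [hcard, Finset.card_map] at h
      omega
    · rw [mem_trunc, Fin.castSucc_zero]; exact hb
    · rw [mem_trunc]
      simp [hq']
  · intro W' hW'
    rw [mem_linSet] at hW'
    obtain ⟨hcard, hz, hb, hc⟩ := hW'
    have hlastW' : Fin.last n ∉ W' := fun h => by simp [h] at hc
    have hlast : Fin.last (n + 1) ∉ W'.map Fin.castSuccEmb := last_not_mem_map_castSucc
    have hq' : Fin.castSucc (Fin.last n) ∉ W'.map Fin.castSuccEmb :=
      fun h => hlastW' (mem_map_castSucc.mp h)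
    have hmem : Fin.last n ∈ zEnds (trunc (W'.map Fin.castSuccEmb)) := last_mem_zEnds_trunc hq'
    rw [mem_linSetQ, mem_linSet]
    refine ⟨⟨?_, ?_, ?_, ?_⟩, by simp [hq']⟩
    · rw [Finset.card_map, hcard]
    · rw [zEnds_of_last_not_mem_of_not_mem hlast hq',
        Finset.card_insert_of_notMem last_not_mem_map_castSucc, Finset.card_map]
      rw [trunc_map] at hmem ⊢
      rw [Finset.card_erase_of_mem hmem, hz]
      have hpos : 0 < (zEnds W').card := Finset.card_pos.mpr ⟨_, hmem⟩
      omega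
    · rw [← Fin.castSucc_zero, mem_map_castSucc]; exact hb
    · simp [hlast]
  · intro W hW
    rw [mem_linSetQ, mem_linSet] at hW
    have hlast : Fin.last (n + 1) ∉ W := fun h => by simpa [h] using hW.1.2.2.2
    exact (eq_map_of_last_not_mem hlast).symm
  · intro W' _
    exact trunc_map W'

lemma lin_rec_last_mem (n k ℓ : ℕ) (b : Bool) :
    lin (n + 1) (k + 1) ℓ b true = lin n k ℓ b true + lin n k ℓ b false := by
  rw [lin_partition, cardQ_last_mem, cardQ_last_mem]

lemma lin_rec_last_not_mem (n k ℓ : ℕ) (b : Bool) :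
    lin (n + 1) k (ℓ + 1) b false = lin n k ℓ b true + lin n k (ℓ + 1) b false := by
  rw [lin_partition, cardQ_last_not_mem_q_true, cardQ_last_not_mem_q_false]

end CycRec

namespace CycRec

lemma zEnds_univ (n : ℕ) : zEnds (Finset.univ : Finset (Fin (n + 1))) = ∅ := by
  ext i; simp [mem_zEnds]

lemma zEnds_empty (n : ℕ) : zEnds (∅ : Finset (Fin (n + 1))) = {Fin.last n} := by
  ext i; simp [mem_zEnds]

lemma eq_univ_of_zEnds_eq_empty {n : ℕ} {W : Finset (Fin (n + 1))}
    (h : zEnds W = ∅) : W = Finset.univ := by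
  by_contra hW
  have hne : Wᶜ.Nonempty := by
    rw [← Finset.card_pos, Finset.card_compl]
    have hlt : W.card < Fintype.card (Fin (n + 1)) := (Finset.card_lt_iff_ne_univ W).mpr hW
    omega
  set i := Wᶜ.max' hne with hi
  have hiW : i ∉ W := by
    have := Wᶜ.max'_mem hne
    rwa [Finset.mem_compl] at this
  have : i ∈ zEnds W := by
    rw [mem_zEnds]
    refine ⟨hiW, ?_⟩
    by_cases hl : i = Fin.last n
    · exact Or.inl hl
    · refine Or.inr ?_
      by_contra hmem
      have h1 : i + 1 ∈ Wᶜ := Finset.mem_compl.mpr hmem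
      have h2 : i + 1 ≤ i := Wᶜ.le_max' _ h1
      have hv : (i + 1).val = i.val + 1 := by
        apply Fin.val_add_one_of_lt
        exact lt_of_le_of_ne (Fin.le_last i) hl
      rw [Fin.le_def, hv] at h2
      omega
  rw [h] at this
  exact absurd this (Finset.notMem_empty i)

lemma lin_of_gt {n k : ℕ} (hk : n + 1 < k) (ℓ : ℕ) (b c : Bool) : lin n k ℓ b c = 0 := by
  rw [lin, Finset.card_eq_zero, Finset.eq_empty_iff_forall_notMem]
  intro W hW
  rw [mem_linSet] at hW
  obtain ⟨hc1, -, -, -⟩ := hW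
  have h1 := Finset.card_le_univ W
  rw [Fintype.card_fin] at h1
  omega

lemma lin_full (n ℓ : ℕ) (b c : Bool) :
    lin n (n + 1) ℓ b c = if b = true ∧ c = true ∧ ℓ = 0 then 1 else 0 := by
  rw [lin]
  by_cases h : b = true ∧ c = true ∧ ℓ = 0
  · rw [if_pos h]
    obtain ⟨hb, hc, hl⟩ := h
    subst hb; subst hc; subst hl
    rw [Finset.card_eq_one]
    refine ⟨Finset.univ, ?_⟩
    ext W
    rw [mem_linSet, Finset.mem_singleton]
    constructor
    · rintro ⟨hcard, -, -, -⟩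
      exact Finset.eq_univ_of_card W (by rw [hcard, Fintype.card_fin])
    · rintro rfl
      exact ⟨by rw [Finset.card_univ, Fintype.card_fin], by rw [zEnds_univ, Finset.card_empty],
        by simp, by simp⟩
  · rw [if_neg h, Finset.card_eq_zero, Finset.eq_empty_iff_forall_notMem]
    intro W hW
    rw [mem_linSet] at hW
    obtain ⟨hcard, hz, hb, hc⟩ := hW
    have hu : W = Finset.univ :=
      Finset.eq_univ_of_card W (by rw [hcard, Fintype.card_fin])
    subst hu
    rw [zEnds_univ, Finset.card_empty] at hz
    exact h ⟨hb.mp (Finset.mem_univ _), hc.mp (Finset.mem_univ _), hz.symm⟩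

lemma lin_ell_zero (n k : ℕ) (b c : Bool) :
    lin n k 0 b c = if k = n + 1 ∧ b = true ∧ c = true then 1 else 0 := by
  by_cases h : k = n + 1 ∧ b = true ∧ c = true
  · rw [if_pos h]
    obtain ⟨hk, hb, hc⟩ := h
    subst hk; subst hb; subst hc
    rw [lin_full]
    simp
  · rw [if_neg h, lin, Finset.card_eq_zero, Finset.eq_empty_iff_forall_notMem]
    intro W hW
    rw [mem_linSet] at hW
    obtain ⟨hcard, hz, hb, hc⟩ := hW
    rw [Finset.card_eq_zero] at hz
    have hu := eq_univ_of_zEnds_eq_empty hz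
    subst hu
    rw [Finset.card_univ, Fintype.card_fin] at hcard
    exact h ⟨hcard.symm, hb.mp (Finset.mem_univ _), hc.mp (Finset.mem_univ _)⟩

lemma lin_zero_left (n ℓ : ℕ) (b c : Bool) :
    lin n 0 ℓ b c = if b = false ∧ c = false ∧ ℓ = 1 then 1 else 0 := by
  rw [lin]
  by_cases h : b = false ∧ c = false ∧ ℓ = 1
  · rw [if_pos h]
    obtain ⟨hb, hc, hl⟩ := h
    subst hb; subst hc; subst hl
    rw [Finset.card_eq_one]
    refine ⟨∅, ?_⟩
    ext W
    rw [mem_linSet, Finset.mem_singleton, Finset.card_eq_zero]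
    constructor
    · rintro ⟨hcard, -, -, -⟩; exact hcard
    · rintro rfl
      exact ⟨rfl, by rw [zEnds_empty, Finset.card_singleton], by simp, by simp⟩
  · rw [if_neg h, Finset.card_eq_zero, Finset.eq_empty_iff_forall_notMem]
    intro W hW
    rw [mem_linSet] at hW
    obtain ⟨hcard, hz, hb, hc⟩ := hW
    rw [Finset.card_eq_zero] at hcard
    subst hcard
    rw [zEnds_empty, Finset.card_singleton] at hz
    simp only [Finset.notMem_empty, false_iff] at hb hc
    exact h ⟨by simpa using hb, by simpa using hc, hz.symm⟩

end CycRec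

namespace CycRec

lemma lin_formula : ∀ n k ℓ : ℕ, k + 1 ≤ n →
    (lin n (k + 1) (ℓ + 1) true true = k.choose (ℓ + 1) * (n - (k + 1)).choose ℓ) ∧
    (lin n (k + 1) (ℓ + 1) true false = k.choose ℓ * (n - (k + 1)).choose ℓ) ∧
    (lin n (k + 1) (ℓ + 1) false true = k.choose ℓ * (n - (k + 1)).choose ℓ) ∧
    (lin n (k + 1) (ℓ + 2) false false = k.choose ℓ * (n - (k + 1)).choose (ℓ + 1)) ∧
    (lin n (k + 1) 1 false false = 0) := by
  intro n
  induction n with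
  | zero => intro k ℓ hk; omega
  | succ n IH =>
    intro k ℓ hk
    have harg : n + 1 - (k + 1) = n - k := by omega
    refine ⟨?_, ?_, ?_, ?_, ?_⟩
    -- G1 : true true
    · rw [lin_rec_last_mem]
      match k, hk with
      | 0, _ =>
        rw [lin_zero_left, lin_zero_left]
        simp
      | k' + 1, hk =>
        have h := IH k' ℓ (by omega)
        rw [h.1, h.2.1, harg, Nat.choose_succ_succ]
        ring
    -- G2 : true false
    · rw [lin_rec_last_not_mem]
      by_cases hkn : k + 1 ≤ n
      · match ℓ with
        | 0 =>
          rw [lin_ell_zero, (IH k 0 hkn).2.1, harg]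
          have hne : ¬(k + 1 = n + 1 ∧ true = true ∧ true = true) := by
            simp only [and_true]; omega
          rw [if_neg hne]
          simp
        | ℓ' + 1 =>
          have h2 : n - k = (n - (k + 1)) + 1 := by omega
          rw [(IH k ℓ' hkn).1, (IH k (ℓ' + 1) hkn).2.1, harg, h2, Nat.choose_succ_succ]
          ring
      · have hkn' : k = n := by omega
        subst hkn'
        rw [lin_full, lin_full, harg, Nat.sub_self]
        match ℓ with
        | 0 => simp
        | ℓ' + 1 => simp
    -- G3 : false true
    · rw [lin_rec_last_mem]
      match k, hk with
      | 0, _ =>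
        rw [lin_zero_left, lin_zero_left]
        match ℓ with
        | 0 => simp
        | ℓ' + 1 => simp
      | k' + 1, hk =>
        match ℓ with
        | 0 =>
          have h := IH k' 0 (by omega)
          rw [h.2.2.1, h.2.2.2.2, harg]
          simp
        | ℓ' + 1 =>
          have h := IH k' (ℓ' + 1) (by omega)
          have h' := IH k' ℓ' (by omega)
          rw [h.2.2.1, h'.2.2.2.1, harg, Nat.choose_succ_succ]
          ring
    -- G4 : false false, ℓ + 2
    · rw [lin_rec_last_not_mem]
      by_cases hkn : k + 1 ≤ n
      · have h2 : n - k = (n - (k + 1)) + 1 := by omega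
        rw [(IH k ℓ hkn).2.2.1, (IH k ℓ hkn).2.2.2.1, harg, h2, Nat.choose_succ_succ]
        ring
      · have hkn' : k = n := by omega
        subst hkn'
        rw [lin_full, lin_full, harg, Nat.sub_self]
        simp
    -- G5 : false false, ℓ = 1
    · rw [lin_rec_last_not_mem, lin_ell_zero]
      by_cases hkn : k + 1 ≤ n
      · rw [(IH k 0 hkn).2.2.2.2]
        simp
      · have hkn' : k = n := by omega
        subst hkn'
        rw [lin_full]
        simp

end CycRec

namespace CycRec

lemma mem_cycEnds' {n : ℕ} {W : Finset (Fin (n + 1))} {i : Fin (n + 1)} :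
    i ∈ cycEnds (n + 1) W ↔ i ∉ W ∧ i + 1 ∈ W := mem_cycEnds

lemma cycEnds_eq_zEnds_of_mem {n : ℕ} {W : Finset (Fin (n + 1))}
    (h : Fin.last n ∈ W ∨ (0 : Fin (n + 1)) ∈ W) :
    cycEnds (n + 1) W = zEnds W := by
  ext i
  rw [mem_cycEnds', mem_zEnds]
  by_cases hi : i = Fin.last n
  · subst hi
    rw [Fin.last_add_one]
    rcases h with h | h
    · constructor
      · rintro ⟨h1, -⟩; exact absurd h h1
      · rintro ⟨h1, -⟩; exact absurd h h1
    · simp [h]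
  · simp [hi]

lemma zEnds_eq_insert_cycEnds {n : ℕ} {W : Finset (Fin (n + 1))}
    (h1 : Fin.last n ∉ W) (h0 : (0 : Fin (n + 1)) ∉ W) :
    zEnds W = insert (Fin.last n) (cycEnds (n + 1) W) := by
  ext i
  rw [mem_zEnds, Finset.mem_insert, mem_cycEnds']
  by_cases hi : i = Fin.last n
  · subst hi
    simp [h1]
  · simp [hi]

lemma last_not_mem_cycEnds {n : ℕ} {W : Finset (Fin (n + 1))}
    (h0 : (0 : Fin (n + 1)) ∉ W) :
    Fin.last n ∉ cycEnds (n + 1) W := by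
  rw [mem_cycEnds', Fin.last_add_one]
  rintro ⟨-, h⟩
  exact h0 h

def cyc (n k ℓ : ℕ) : ℕ :=
  (Finset.univ.filter (fun W : Finset (Fin n) =>
    W.card = k ∧ (cycEnds n W).card = ℓ)).card

lemma card_filter_split {α : Type*} (s : Finset α) (P Q : α → Prop)
    [DecidablePred P] [DecidablePred Q] :
    (s.filter P).card = (s.filter (fun a => P a ∧ Q a)).card
      + (s.filter (fun a => P a ∧ ¬ Q a)).card := by
  rw [← Finset.filter_filter, ← Finset.filter_filter,
    Finset.card_filter_add_card_filter_not]

lemma cyc_partition (n k ℓ : ℕ) :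
    cyc (n + 1) k ℓ = lin n k ℓ true true + lin n k ℓ true false
      + lin n k ℓ false true + lin n k (ℓ + 1) false false := by
  rw [cyc]
  rw [card_filter_split (Finset.univ)
    (fun W : Finset (Fin (n + 1)) => W.card = k ∧ (cycEnds (n + 1) W).card = ℓ)
    (fun W => (0 : Fin (n + 1)) ∈ W)]
  rw [card_filter_split (Finset.univ)
    (fun W : Finset (Fin (n + 1)) =>
      (W.card = k ∧ (cycEnds (n + 1) W).card = ℓ) ∧ (0 : Fin (n + 1)) ∈ W)
    (fun W => Fin.last n ∈ W)]
  rw [card_filter_split (Finset.univ)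
    (fun W : Finset (Fin (n + 1)) =>
      (W.card = k ∧ (cycEnds (n + 1) W).card = ℓ) ∧ ¬ (0 : Fin (n + 1)) ∈ W)
    (fun W => Fin.last n ∈ W)]
  have e1 : Finset.univ.filter (fun W : Finset (Fin (n + 1)) =>
      ((W.card = k ∧ (cycEnds (n + 1) W).card = ℓ) ∧ (0 : Fin (n + 1)) ∈ W) ∧ Fin.last n ∈ W)
      = linSet n k ℓ true true := by
    ext W
    rw [Finset.mem_filter, mem_linSet]
    constructor
    · rintro ⟨-, ⟨⟨h1, h2⟩, h3⟩, h4⟩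
      rw [cycEnds_eq_zEnds_of_mem (Or.inl h4)] at h2
      exact ⟨h1, h2, by simp [h3], by simp [h4]⟩
    · rintro ⟨h1, h2, h3, h4⟩
      rw [← cycEnds_eq_zEnds_of_mem (Or.inl (h4.mpr rfl))] at h2
      exact ⟨Finset.mem_univ _, ⟨⟨h1, h2⟩, h3.mpr rfl⟩, h4.mpr rfl⟩
  have e2 : Finset.univ.filter (fun W : Finset (Fin (n + 1)) =>
      ((W.card = k ∧ (cycEnds (n + 1) W).card = ℓ) ∧ (0 : Fin (n + 1)) ∈ W) ∧ ¬ Fin.last n ∈ W)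
      = linSet n k ℓ true false := by
    ext W
    rw [Finset.mem_filter, mem_linSet]
    constructor
    · rintro ⟨-, ⟨⟨h1, h2⟩, h3⟩, h4⟩
      rw [cycEnds_eq_zEnds_of_mem (Or.inr h3)] at h2
      exact ⟨h1, h2, by simp [h3], by simp [h4]⟩
    · rintro ⟨h1, h2, h3, h4⟩
      rw [← cycEnds_eq_zEnds_of_mem (Or.inr (h3.mpr rfl))] at h2
      simp only [Bool.false_eq_true, iff_false] at h4
      exact ⟨Finset.mem_univ _, ⟨⟨h1, h2⟩, h3.mpr rfl⟩, h4⟩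
  have e3 : Finset.univ.filter (fun W : Finset (Fin (n + 1)) =>
      ((W.card = k ∧ (cycEnds (n + 1) W).card = ℓ) ∧ ¬ (0 : Fin (n + 1)) ∈ W) ∧ Fin.last n ∈ W)
      = linSet n k ℓ false true := by
    ext W
    rw [Finset.mem_filter, mem_linSet]
    constructor
    · rintro ⟨-, ⟨⟨h1, h2⟩, h3⟩, h4⟩
      rw [cycEnds_eq_zEnds_of_mem (Or.inl h4)] at h2
      exact ⟨h1, h2, by simp [h3], by simp [h4]⟩
    · rintro ⟨h1, h2, h3, h4⟩
      rw [← cycEnds_eq_zEnds_of_mem (Or.inl (h4.mpr rfl))] at h2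
      simp only [Bool.false_eq_true, iff_false] at h3
      exact ⟨Finset.mem_univ _, ⟨⟨h1, h2⟩, h3⟩, h4.mpr rfl⟩
  have e4 : Finset.univ.filter (fun W : Finset (Fin (n + 1)) =>
      ((W.card = k ∧ (cycEnds (n + 1) W).card = ℓ) ∧ ¬ (0 : Fin (n + 1)) ∈ W) ∧ ¬ Fin.last n ∈ W)
      = linSet n k (ℓ + 1) false false := by
    ext W
    rw [Finset.mem_filter, mem_linSet]
    constructor
    · rintro ⟨-, ⟨⟨h1, h2⟩, h3⟩, h4⟩
      have hz : zEnds W = insert (Fin.last n) (cycEnds (n + 1) W) :=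
        zEnds_eq_insert_cycEnds h4 h3
      refine ⟨h1, ?_, by simp [h3], by simp [h4]⟩
      rw [hz, Finset.card_insert_of_notMem (last_not_mem_cycEnds h3), h2]
    · rintro ⟨h1, h2, h3, h4⟩
      simp only [Bool.false_eq_true, iff_false] at h3 h4
      have hz : zEnds W = insert (Fin.last n) (cycEnds (n + 1) W) :=
        zEnds_eq_insert_cycEnds h4 h3
      rw [hz, Finset.card_insert_of_notMem (last_not_mem_cycEnds h3)] at h2
      exact ⟨Finset.mem_univ _, ⟨⟨h1, by omega⟩, h3⟩, h4⟩
  rw [e1, e2, e3, e4, lin, lin, lin, lin]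
  ring

end CycRec

namespace CycRec

lemma cycEnds_univ (n : ℕ) :
    cycEnds (n + 1) (Finset.univ : Finset (Fin (n + 1))) = ∅ := by
  ext i; simp [mem_cycEnds']

lemma eq_univ_of_cycEnds_eq_empty {n : ℕ} {W : Finset (Fin (n + 1))} (hW : W.Nonempty)
    (h : cycEnds (n + 1) W = ∅) : W = Finset.univ := by
  by_contra hne
  obtain ⟨x, hx⟩ : ∃ x, x ∉ W := by
    by_contra hall
    push_neg at hall
    exact hne (Finset.eq_univ_iff_forall.mpr hall)
  have hmem := runEnd_mem_cycEnds W hW x hx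
  rw [h] at hmem
  exact absurd hmem (Finset.notMem_empty _)

lemma cyc_ell_zero {k : ℕ} (n : ℕ) (hk : 1 ≤ k) :
    cyc n k 0 = if k = n then 1 else 0 := by
  match n with
  | 0 =>
    rw [if_neg (by omega), cyc, Finset.card_eq_zero, Finset.eq_empty_iff_forall_notMem]
    intro W hW
    rw [Finset.mem_filter] at hW
    have h1 := Finset.card_le_univ W
    rw [Fintype.card_fin] at h1
    have := hW.2.1
    omega
  | n + 1 =>
    by_cases h : k = n + 1
    · subst h
      rw [if_pos rfl, cyc, Finset.card_eq_one]
      refine ⟨Finset.univ, ?_⟩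
      ext W
      rw [Finset.mem_filter, Finset.mem_singleton]
      constructor
      · rintro ⟨-, h1, -⟩
        exact Finset.eq_univ_of_card W (by rw [h1, Fintype.card_fin])
      · rintro rfl
        exact ⟨Finset.mem_univ _, by rw [Finset.card_univ, Fintype.card_fin],
          by rw [cycEnds_univ, Finset.card_empty]⟩
    · rw [if_neg h, cyc, Finset.card_eq_zero, Finset.eq_empty_iff_forall_notMem]
      intro W hW
      rw [Finset.mem_filter] at hW
      obtain ⟨-, h1, h2⟩ := hW
      have hWne : W.Nonempty := Finset.card_pos.mp (by omega)
      rw [Finset.card_eq_zero] at h2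
      have hu := eq_univ_of_cycEnds_eq_empty hWne h2
      subst hu
      rw [Finset.card_univ, Fintype.card_fin] at h1
      exact h h1.symm

lemma cyc_eq_zero_of_le {n k ℓ : ℕ} (hnk : n ≤ k) (hl : 1 ≤ ℓ) : cyc n k ℓ = 0 := by
  match n, hnk with
  | 0, hnk =>
    rw [cyc, Finset.card_eq_zero, Finset.eq_empty_iff_forall_notMem]
    intro W hW
    rw [Finset.mem_filter] at hW
    have h2 := Finset.card_le_univ (cycEnds 0 W)
    rw [Fintype.card_fin] at h2
    have := hW.2.2
    omega
  | n + 1, hnk =>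
    rw [cyc, Finset.card_eq_zero, Finset.eq_empty_iff_forall_notMem]
    intro W hW
    rw [Finset.mem_filter] at hW
    obtain ⟨-, h1, h2⟩ := hW
    have hle := Finset.card_le_univ W
    rw [Fintype.card_fin] at hle
    have hu : W = Finset.univ := Finset.eq_univ_of_card W (by rw [h1, Fintype.card_fin]; omega)
    subst hu
    rw [cycEnds_univ, Finset.card_empty] at h2
    omega

lemma cyc_formula {n k ℓ : ℕ} (hk : 1 ≤ k) (hkn : k < n) (hl : 1 ≤ ℓ) :
    cyc n k ℓ = (k - 1).choose ℓ * (n - k - 1).choose (ℓ - 1)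
      + 2 * ((k - 1).choose (ℓ - 1) * (n - k - 1).choose (ℓ - 1))
      + (k - 1).choose (ℓ - 1) * (n - k - 1).choose ℓ := by
  obtain ⟨k', rfl⟩ : ∃ k', k = k' + 1 := ⟨k - 1, by omega⟩
  obtain ⟨ℓ', rfl⟩ : ∃ ℓ', ℓ = ℓ' + 1 := ⟨ℓ - 1, by omega⟩
  obtain ⟨n', rfl⟩ : ∃ n', n = n' + 1 := ⟨n - 1, by omega⟩
  have hk'n : k' + 1 ≤ n' := by omega
  have h := lin_formula n' k' ℓ' hk'n
  rw [cyc_partition, h.1, h.2.1, h.2.2.1, h.2.2.2.1]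
  have e1 : k' + 1 - 1 = k' := by omega
  have e2 : ℓ' + 1 - 1 = ℓ' := by omega
  have e3 : n' + 1 - (k' + 1) - 1 = n' - (k' + 1) := by omega
  rw [e1, e2, e3]
  ring

lemma cycSet_card_eq_cyc {n k ℓ : ℕ} (hk : 1 ≤ k) :
    (cycSet n k ℓ).card = cyc n k ℓ := by
  rw [cycSet, cyc]
  congr 1
  apply Finset.filter_congr
  intro W _
  constructor
  · rintro ⟨h1, h2⟩
    refine ⟨h1, ?_⟩
    rw [← cycNumComponents_eq W (Finset.card_pos.mp (by omega))]
    exact h2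
  · rintro ⟨h1, h2⟩
    refine ⟨h1, ?_⟩
    rw [cycNumComponents_eq W (Finset.card_pos.mp (by omega))]
    exact h2

lemma sum_Icc_choose_of_le {lo X r : ℕ} (h : lo ≤ r) :
    ∑ m ∈ Finset.Icc lo X, m.choose r = (X + 1).choose (r + 1) := by
  have hsub : Finset.Icc r X ⊆ Finset.Icc lo X := by
    intro x hx
    rw [Finset.mem_Icc] at hx ⊢
    omega
  have hzero : ∀ x ∈ Finset.Icc lo X, x ∉ Finset.Icc r X → x.choose r = 0 := by
    intro x hx hnx
    rw [Finset.mem_Icc] at hx hnx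
    exact Nat.choose_eq_zero_of_lt (by omega)
  rw [← Finset.sum_subset hsub hzero, Nat.sum_Icc_choose]

end CycRec

open CycRec in
theorem cycSet_card_recurrence (a μ j : ℕ) (ha : 3 ≤ a) (hμ : 2 ≤ μ) (hj : 1 ≤ j) :
    (cycSet a μ j).card =
      (cycSet (a - 1) (μ - 1) j).card +
        ∑ i ∈ Finset.Icc (μ + j - 2) (a - 2), (cycSet i (μ - 1) (j - 1)).card := by
  classical
  by_cases hμa : μ < a
  · rw [cycSet_card_eq_cyc (by omega), cycSet_card_eq_cyc (by omega)]
    rw [Finset.sum_congr rfl (fun i _ => cycSet_card_eq_cyc (by omega))]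
    by_cases hj1 : j = 1
    · subst hj1
      have hIcc : μ + 1 - 2 = μ - 1 := by omega
      rw [hIcc]
      have hsum : ∑ i ∈ Finset.Icc (μ - 1) (a - 2), cyc i (μ - 1) 0
          = ∑ i ∈ Finset.Icc (μ - 1) (a - 2), (if μ - 1 = i then 1 else 0) :=
        Finset.sum_congr rfl (fun i _ => cyc_ell_zero i (by omega))
      rw [hsum, Finset.sum_ite_eq, if_pos (by rw [Finset.mem_Icc]; omega)]
      rw [cyc_formula (by omega) hμa (by omega), cyc_formula (by omega) (by omega) (by omega)]
      simp only [Nat.sub_self, Nat.choose_one_right, Nat.choose_zero_right, Nat.choose_self]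
      have e1 : (a - 1) - (μ - 1) - 1 = a - μ - 1 := by omega
      rw [e1]
      omega
    · have hj2 : 2 ≤ j := by omega
      obtain ⟨q, rfl⟩ : ∃ q, j = q + 2 := ⟨j - 2, by omega⟩
      obtain ⟨p, rfl⟩ : ∃ p, μ = p + 2 := ⟨μ - 2, by omega⟩
      by_cases ha2 : a = p + 3
      · subst ha2
        have hIcc : Finset.Icc (p + 2 + (q + 2) - 2) (p + 3 - 2) = ∅ :=
          Finset.Icc_eq_empty (by omega)
        rw [hIcc, Finset.sum_empty]
        have ea1 : p + 3 - 1 = p + 2 := by omega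
        have ea2 : p + 2 - 1 = p + 1 := by omega
        rw [ea1, ea2]
        rw [cyc_formula (by omega) (by omega) (by omega),
          cyc_formula (by omega) (by omega) (by omega)]
        have e1 : p + 3 - (p + 2) - 1 = 0 := by omega
        have e2 : p + 2 - (p + 1) - 1 = 0 := by omega
        rw [e1, e2]
        simp [Nat.choose_zero_succ]
      · obtain ⟨t, rfl⟩ : ∃ t, a = p + 4 + t := ⟨a - p - 4, by omega⟩
        -- rewrite the sum range as a shifted interval
        have hIcc : Finset.Icc (p + 2 + (q + 2) - 2) (p + 4 + t - 2)
            = (Finset.Icc q t).map (addLeftEmbedding (p + 2)) := by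
          have h1 : p + 2 + (q + 2) - 2 = p + 2 + q := by omega
          have h2 : p + 4 + t - 2 = p + 2 + t := by omega
          rw [h1, h2, Finset.map_add_left_Icc]
        rw [hIcc, Finset.sum_map]
        have ea1 : p + 2 - 1 = p + 1 := by omega
        have ea2 : q + 2 - 1 = q + 1 := by omega
        have ea3 : p + 4 + t - 1 = p + 3 + t := by omega
        rw [ea1, ea2, ea3]
        have hterm : ∀ m ∈ Finset.Icc q t,
            cyc (addLeftEmbedding (p + 2) m) (p + 1) (q + 1)
              = Nat.choose p (q + 1) * Nat.choose m q
                + (2 * Nat.choose p q) * Nat.choose m q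
                + Nat.choose p q * Nat.choose m (q + 1) := by
          intro m hm
          rw [Finset.mem_Icc] at hm
          have he : (addLeftEmbedding (p + 2) m : ℕ) = p + 2 + m := rfl
          rw [he]
          rw [cyc_formula (by omega) (by omega) (by omega)]
          have e1 : p + 1 - 1 = p := by omega
          have e2 : q + 1 - 1 = q := by omega
          have e3 : p + 2 + m - (p + 1) - 1 = m := by omega
          rw [e1, e2, e3]
          ring
        rw [Finset.sum_congr rfl hterm]
        rw [Finset.sum_add_distrib, Finset.sum_add_distrib,
          ← Finset.mul_sum, ← Finset.mul_sum, ← Finset.mul_sum]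
        rw [Nat.sum_Icc_choose, sum_Icc_choose_of_le (by omega)]
        rw [cyc_formula (by omega) (by omega) (by omega),
          cyc_formula (by omega) (by omega) (by omega)]
        have e1 : p + 2 - 1 = p + 1 := by omega
        have e2 : q + 2 - 1 = q + 1 := by omega
        have e3 : p + 4 + t - (p + 2) - 1 = t + 1 := by omega
        have e4 : p + 1 - 1 = p := by omega
        have e5 : p + 3 + t - (p + 1) - 1 = t + 1 := by omega
        rw [e1, e2, e3, e4, e5]
        rw [Nat.choose_succ_succ p (q + 1), Nat.choose_succ_succ p q]
        ring
  · have hL : (cycSet a μ j).card = 0 := by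
      rw [cycSet_card_eq_cyc (by omega)]
      exact cyc_eq_zero_of_le (by omega) hj
    have hT : (cycSet (a - 1) (μ - 1) j).card = 0 := by
      rw [cycSet_card_eq_cyc (by omega)]
      exact cyc_eq_zero_of_le (by omega) hj
    have hIcc : Finset.Icc (μ + j - 2) (a - 2) = ∅ := Finset.Icc_eq_empty (by omega)
    rw [hL, hT, hIcc, Finset.sum_empty]
    rfl
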